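/- arXiv:2003.02496 — 3 statements merged into one kernel-verified Lean document; each statement's English description precedes it below -/
import Mathlib

section
/- The endomorphisms β̃_i satisfy the braid relation: for each i with 1 ≤ i ≤ n−2, β̃_i ∘ β̃_{i+1} ∘ β̃_i = β̃_{i+1} ∘ β̃_i ∘ β̃_{i+1} as endomorphisms of E. -/
/-- The free group `E` on the generators `e_{k,j}`, `k = 0,1,…,n`, `j ∈ ℤ/dℤ`,
of the covering groupoid of the `d`-fold branched cover over a disk with `n`
branch points. -/
abbrev Egrp (n d : ℕ) : Type := FreeGroup (Fin (n + 1) × ZMod d)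

open Fin.NatCast in
/-- The generator `e_{k,j}` of `E` (first index read as a natural number). -/
def eGen (n d : ℕ) (k : ℕ) (j : ZMod d) : Egrp n d :=
  FreeGroup.of ((k : Fin (n + 1)), j)

/-- The lift `β̃_i` of the half Dehn twist `β_i`, as an endomorphism of the
free group `E`, defined on generators by
`e_{i−1,j} ↦ e_{i−1,j}·e_{i,j+1}`, `e_{i,j} ↦ e_{i,j+1}⁻¹`,
`e_{i+1,j} ↦ e_{i,j}·e_{i+1,j}`, and fixing all other generators. -/
def betaTilde (n d : ℕ) (i : ℕ) : Egrp n d →* Egrp n d :=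
  FreeGroup.lift fun p =>
    if (p.1 : ℕ) + 1 = i then
      FreeGroup.of p * eGen n d i (p.2 + 1)
    else if (p.1 : ℕ) = i then
      (FreeGroup.of (p.1, p.2 + 1))⁻¹
    else if (p.1 : ℕ) = i + 1 then
      eGen n d i p.2 * FreeGroup.of p
    else
      FreeGroup.of p

open Fin.NatCast in
lemma bt_lo (n d : ℕ) (a b : ℕ) (hb : b = a + 1) (hn : b ≤ n) (j : ZMod d) :
    betaTilde n d b (eGen n d a j) = eGen n d a j * eGen n d b (j + 1) := by
  subst hb
  have h : (((a : ℕ) : Fin (n + 1)) : ℕ) = a := Fin.val_cast_of_lt (by omega)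
  simp only [betaTilde, eGen, FreeGroup.lift_apply_of, h]
  split_ifs <;> first | rfl | omega

open Fin.NatCast in
lemma bt_mid (n d : ℕ) (a : ℕ) (hn : a ≤ n) (j : ZMod d) :
    betaTilde n d a (eGen n d a j) = (eGen n d a (j + 1))⁻¹ := by
  have h : (((a : ℕ) : Fin (n + 1)) : ℕ) = a := Fin.val_cast_of_lt (by omega)
  simp only [betaTilde, eGen, FreeGroup.lift_apply_of, h]
  split_ifs <;> first | rfl | omega | trivial

open Fin.NatCast in
lemma bt_hi (n d : ℕ) (a b : ℕ) (hb : b = a + 1) (hn : b ≤ n) (j : ZMod d) :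
    betaTilde n d a (eGen n d b j) = eGen n d a j * eGen n d b j := by
  subst hb
  have h : (((a + 1 : ℕ) : Fin (n + 1)) : ℕ) = a + 1 := Fin.val_cast_of_lt (by omega)
  simp only [betaTilde, eGen, FreeGroup.lift_apply_of, h]
  split_ifs <;> first | rfl | omega | trivial

open Fin.NatCast in
lemma bt_other (n d : ℕ) (i m : ℕ) (h1 : m + 1 ≠ i) (h2 : m ≠ i) (h3 : m ≠ i + 1)
    (hm : m ≤ n) (j : ZMod d) :
    betaTilde n d i (eGen n d m j) = eGen n d m j := by
  have h : (((m : ℕ) : Fin (n + 1)) : ℕ) = m := Fin.val_cast_of_lt (by omega)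
  simp only [betaTilde, eGen, FreeGroup.lift_apply_of, h]
  split_ifs <;> first | rfl | omega | trivial

/-- The lifts `β̃_i` satisfy the braid relation: for each `i` with
`1 ≤ i ≤ n−2`, `β̃_i ∘ β̃_{i+1} ∘ β̃_i = β̃_{i+1} ∘ β̃_i ∘ β̃_{i+1}`
as endomorphisms of `E`. -/
theorem betaTilde_braid_relation (n d : ℕ) (hn : 2 ≤ n) (hd : 2 ≤ d)
    (i : ℕ) (hi1 : 1 ≤ i) (hi2 : i ≤ n - 2) :
    (betaTilde n d i).comp ((betaTilde n d (i + 1)).comp (betaTilde n d i)) =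
      (betaTilde n d (i + 1)).comp ((betaTilde n d i).comp (betaTilde n d (i + 1))) := by
  obtain ⟨m, rfl⟩ : ∃ m, i = m + 1 := ⟨i - 1, by omega⟩
  have hm3 : m + 3 ≤ n := by omega
  apply FreeGroup.ext_hom
  rintro ⟨k, j⟩
  have hk : (k : ℕ) ≤ n := by have := k.isLt; omega
  have hof : FreeGroup.of ((k : Fin (n + 1)), j) = eGen n d (k : ℕ) j := by
    open Fin.NatCast in simp [eGen, Fin.cast_val_eq_self]
  simp only [MonoidHom.comp_apply, hof]
  rcases eq_or_ne ((k : ℕ)) m with h | h0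
  · rw [h]
    conv_lhs =>
      rw [bt_lo n d m (m + 1) rfl (by omega) j, map_mul,
        bt_other n d (m + 2) m (by omega) (by omega) (by omega) (by omega) j,
        bt_lo n d (m + 1) (m + 2) rfl (by omega) (j + 1), map_mul, map_mul,
        bt_lo n d m (m + 1) rfl (by omega) j,
        bt_mid n d (m + 1) (by omega) (j + 1),
        bt_hi n d (m + 1) (m + 2) rfl (by omega) (j + 1 + 1)]
    conv_rhs =>
      rw [bt_other n d (m + 2) m (by omega) (by omega) (by omega) (by omega) j,
        bt_lo n d m (m + 1) rfl (by omega) j, map_mul,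
        bt_other n d (m + 2) m (by omega) (by omega) (by omega) (by omega) j,
        bt_lo n d (m + 1) (m + 2) rfl (by omega) (j + 1)]
    group
  rcases eq_or_ne ((k : ℕ)) (m + 1) with h | h1
  · rw [h]
    conv_lhs =>
      rw [bt_mid n d (m + 1) (by omega) j, map_inv,
        bt_lo n d (m + 1) (m + 2) rfl (by omega) (j + 1), map_inv, map_mul,
        bt_mid n d (m + 1) (by omega) (j + 1),
        bt_hi n d (m + 1) (m + 2) rfl (by omega) (j + 1 + 1)]
    conv_rhs =>
      rw [bt_lo n d (m + 1) (m + 2) rfl (by omega) j, map_mul,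
        bt_mid n d (m + 1) (by omega) j,
        bt_hi n d (m + 1) (m + 2) rfl (by omega) (j + 1), map_mul, map_inv, map_mul,
        bt_lo n d (m + 1) (m + 2) rfl (by omega) (j + 1),
        bt_mid n d (m + 2) (by omega) (j + 1)]
    group
  rcases eq_or_ne ((k : ℕ)) (m + 2) with h | h2
  · rw [h]
    conv_lhs =>
      rw [bt_hi n d (m + 1) (m + 2) rfl (by omega) j, map_mul,
        bt_lo n d (m + 1) (m + 2) rfl (by omega) j,
        bt_mid n d (m + 2) (by omega) j, map_mul, map_mul, map_inv,
        bt_mid n d (m + 1) (by omega) j,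
        bt_hi n d (m + 1) (m + 2) rfl (by omega) (j + 1)]
    conv_rhs =>
      rw [bt_mid n d (m + 2) (by omega) j, map_inv,
        bt_hi n d (m + 1) (m + 2) rfl (by omega) (j + 1), map_inv, map_mul,
        bt_lo n d (m + 1) (m + 2) rfl (by omega) (j + 1),
        bt_mid n d (m + 2) (by omega) (j + 1)]
    group
  rcases eq_or_ne ((k : ℕ)) (m + 3) with h | h3
  · rw [h]
    conv_lhs =>
      rw [bt_other n d (m + 1) (m + 3) (by omega) (by omega) (by omega) (by omega) j,
        bt_hi n d (m + 2) (m + 3) rfl (by omega) j, map_mul,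
        bt_hi n d (m + 1) (m + 2) rfl (by omega) j,
        bt_other n d (m + 1) (m + 3) (by omega) (by omega) (by omega) (by omega) j]
    conv_rhs =>
      rw [bt_hi n d (m + 2) (m + 3) rfl (by omega) j, map_mul,
        bt_hi n d (m + 1) (m + 2) rfl (by omega) j,
        bt_other n d (m + 1) (m + 3) (by omega) (by omega) (by omega) (by omega) j,
        map_mul, map_mul,
        bt_lo n d (m + 1) (m + 2) rfl (by omega) j,
        bt_mid n d (m + 2) (by omega) j,
        bt_hi n d (m + 2) (m + 3) rfl (by omega) j]
    group
  · rw [bt_other n d (m + 1) (k : ℕ) (by omega) (by omega) (by omega) (by omega) j,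
      bt_other n d (m + 2) (k : ℕ) (by omega) (by omega) (by omega) (by omega) j,
      bt_other n d (m + 1) (k : ℕ) (by omega) (by omega) (by omega) (by omega) j,
      bt_other n d (m + 2) (k : ℕ) (by omega) (by omega) (by omega) (by omega) j]
end

section
/- For each i with 1 ≤ i ≤ n−1, the intertwining identity ι ∘ T_i = β̃_i ∘ ι holds as homomorphisms F → E; that is, the action of β̃_i on the elements ι(x_{k,j}) of E is given exactly by the formulas defining T_i. -/
/-- The free group `F` on the `(d−1)(n−1)` generators `x_{i,j}`,
`i = 1,…,n−1`, `j = 1,…,d−1`. -/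
abbrev Fgrp (n d : ℕ) : Type := FreeGroup (Fin (n - 1) × Fin (d - 1))

/-- The element `x_{k,j}` of `F`, with the second index read modulo `d`:
for `j ≡ 1,…,d−1 (mod d)` it is the corresponding generator, and for
`j ≡ 0 (mod d)` (i.e. `j = d`) it is `x_{k,d} := (x_{k,1}·x_{k,2}·…·x_{k,d−1})⁻¹`.
(Junk value `1` outside the valid index ranges.) -/
def X (n d k j : ℕ) : Fgrp n d :=
  if hk : k - 1 < n - 1 then
    if j % d = 0 then
      ((List.ofFn fun b : Fin (d - 1) =>
        FreeGroup.of ((⟨k - 1, hk⟩ : Fin (n - 1)), b)).prod)⁻¹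
    else if hj : j % d - 1 < d - 1 then
      FreeGroup.of ((⟨k - 1, hk⟩ : Fin (n - 1)), (⟨j % d - 1, hj⟩ : Fin (d - 1)))
    else 1
  else 1

/-- The element `y_{k,j} := x_{k,1}·x_{k,2}·…·x_{k,j−1}` of `F`. -/
def Y (n d k j : ℕ) : Fgrp n d :=
  ((List.range (j - 1)).map fun t => X n d k (t + 1)).prod

/-- The endomorphism `T_i` of the free group `F`, defined on the generators
(with `1 ≤ k ≤ n−1`, `1 ≤ j ≤ d−1`) by
`x_{i−1,j} ↦ x_{i−1,j−1}⁻¹·…·x_{i−1,1}⁻¹·x_{i,j+1}·x_{i−1,1}·…·x_{i−1,j}`,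
`x_{i,j} ↦ x_{i,2}·…·x_{i,j}·x_{i,j+1}⁻¹·x_{i,j}⁻¹·…·x_{i,2}⁻¹`,
`x_{i+1,j} ↦ x_{i,j−1}⁻¹·…·x_{i,1}⁻¹·x_{i+1,j}·x_{i,1}·…·x_{i,j}`,
fixing all other generators. -/
def T (n d : ℕ) (i : ℕ) : Fgrp n d →* Fgrp n d :=
  FreeGroup.lift fun p =>
    let k := (p.1 : ℕ) + 1
    let j := (p.2 : ℕ) + 1
    if k + 1 = i then
      (Y n d k j)⁻¹ * X n d i (j + 1) * Y n d k (j + 1)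
    else if k = i then
      (((List.range (j - 1)).map fun t => X n d i (t + 2)).prod) *
        (X n d i (j + 1))⁻¹ *
        (((List.range (j - 1)).map fun t => X n d i (t + 2)).prod)⁻¹
    else if k = i + 1 then
      (Y n d i j)⁻¹ * X n d k j * Y n d i (j + 1)
    else
      FreeGroup.of p

open Fin.NatCast in
/-- The path `p_k := e_{0,1}·e_{1,1}·…·e_{k−1,1}` in `E`. -/
def pathP (n d k : ℕ) : Egrp n d :=
  ((List.range k).map fun t => FreeGroup.of (((t : ℕ) : Fin (n + 1)), (1 : ZMod d))).prod

/-- The homomorphism `ι : F → E` determined on generators by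
`ι(x_{k,j}) = p_k·e_{k,j}·e_{k,j+1}⁻¹·p_k⁻¹`. -/
def iota (n d : ℕ) : Fgrp n d →* Egrp n d :=
  FreeGroup.lift fun p =>
    let k := (p.1 : ℕ) + 1
    let j := (p.2 : ℕ) + 1
    pathP n d k * eGen n d k (j : ZMod d) * (eGen n d k ((j : ZMod d) + 1))⁻¹ *
      (pathP n d k)⁻¹


section Lemmas

variable {n d : ℕ}

lemma pathP_succ (k : ℕ) : pathP n d (k+1) = pathP n d k * eGen n d k 1 := by
  simp [pathP, eGen, List.range_succ]

lemma iota_of (p : Fin (n-1) × Fin (d-1)) :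
    iota n d (FreeGroup.of p) =
      pathP n d ((p.1:ℕ)+1) * eGen n d ((p.1:ℕ)+1) ((((p.2:ℕ)+1 : ℕ) : ZMod d)) *
        (eGen n d ((p.1:ℕ)+1) ((((p.2:ℕ)+1 : ℕ) : ZMod d) + 1))⁻¹ *
        (pathP n d ((p.1:ℕ)+1))⁻¹ := by
  simp [iota]

open Fin.NatCast in
lemma beta_eGen (i k : ℕ) (hk : k ≤ n) (j : ZMod d) :
    betaTilde n d i (eGen n d k j) =
      if k + 1 = i then eGen n d k j * eGen n d i (j+1)
      else if k = i then (eGen n d k (j+1))⁻¹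
      else if k = i+1 then eGen n d i j * eGen n d k j
      else eGen n d k j := by
  have hv : (((k : Fin (n+1))) : ℕ) = k := by
    simp [Fin.val_natCast, Nat.mod_eq_of_lt (Nat.lt_succ_of_le hk)]
  simp [betaTilde, eGen, hv]

lemma iota_X_lt (k j : ℕ) (hk1 : 1 ≤ k) (hk2 : k ≤ n - 1) (hn : 2 ≤ n)
    (hj1 : 1 ≤ j) (hj2 : j < d) :
    iota n d (X n d k j) =
      pathP n d k * eGen n d k ((j : ZMod d)) *
        (eGen n d k ((j : ZMod d) + 1))⁻¹ * (pathP n d k)⁻¹ := by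
  have hk : k - 1 < n - 1 := by omega
  have hmod : j % d = j := Nat.mod_eq_of_lt hj2
  have hjne : j % d ≠ 0 := by omega
  have hjlt : j % d - 1 < d - 1 := by omega
  rw [X, dif_pos hk, if_neg hjne, dif_pos hjlt, iota_of]
  have h1 : ((⟨k-1, hk⟩ : Fin (n-1)) : ℕ) + 1 = k := by simp; omega
  have h2 : ((⟨j % d - 1, hjlt⟩ : Fin (d-1)) : ℕ) + 1 = j := by simp; omega
  rw [h1, h2]

lemma iota_prod (k c m : ℕ) (hk1 : 1 ≤ k) (hk2 : k ≤ n - 1) (hn : 2 ≤ n)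
    (hc : 1 ≤ c) (hcm : c + m ≤ d) :
    iota n d (((List.range m).map fun t => X n d k (t + c)).prod) =
      pathP n d k * eGen n d k ((c : ZMod d)) *
        (eGen n d k (((c + m : ℕ) : ZMod d)))⁻¹ * (pathP n d k)⁻¹ := by
  induction m with
  | zero => simp
  | succ m ih =>
      rw [List.range_succ, List.map_append, List.prod_append, map_mul,
        ih (by omega)]
      simp only [List.map_cons, List.map_nil, List.prod_cons, List.prod_nil, mul_one]
      rw [iota_X_lt k (m + c) hk1 hk2 hn (by omega) (by omega)]
      push_cast
      ring_nf
      group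

lemma iota_X (k j : ℕ) (hk1 : 1 ≤ k) (hk2 : k ≤ n - 1) (hn : 2 ≤ n) (hd : 2 ≤ d)
    (hj1 : 1 ≤ j) (hj2 : j ≤ d) :
    iota n d (X n d k j) =
      pathP n d k * eGen n d k ((j : ZMod d)) *
        (eGen n d k ((j : ZMod d) + 1))⁻¹ * (pathP n d k)⁻¹ := by
  rcases lt_or_eq_of_le hj2 with h | h
  · exact iota_X_lt k j hk1 hk2 hn hj1 h
  · subst h
    have hk : k - 1 < n - 1 := by omega
    have hX : ∀ b : Fin (j-1), X n j k ((b:ℕ)+1)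
        = FreeGroup.of ((⟨k-1,hk⟩ : Fin (n-1)), b) := by
      intro b
      have hb : (b:ℕ)+1 < j := by omega
      have hmod : ((b:ℕ)+1) % j = (b:ℕ)+1 := Nat.mod_eq_of_lt hb
      have h2 : ((b:ℕ)+1) % j - 1 < j - 1 := by omega
      rw [X, dif_pos hk, if_neg (by omega), dif_pos h2]
      have hfin : (⟨((b:ℕ)+1) % j - 1, h2⟩ : Fin (j-1)) = b := by
        ext; simp [hmod]
      rw [hfin]
    have hXd : X n j k j = ((((List.range (j-1)).map fun t => X n j k (t+1)).prod))⁻¹ := by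
      rw [X, dif_pos hk, if_pos (Nat.mod_self j)]
      congr 1
      rw [List.ofFn_eq_map, ← List.map_coe_finRange_eq_range, List.map_map]
      exact congrArg List.prod (List.map_congr_left fun b _ => (hX b).symm)
    rw [hXd, map_inv, iota_prod k 1 (j-1) hk1 hk2 hn le_rfl (by omega)]
    have h1 : ((1 + (j-1) : ℕ) : ZMod j) = ((j : ℕ) : ZMod j) := by congr 1; omega
    rw [h1, ZMod.natCast_self]
    push_cast
    group

lemma iota_Y (k j : ℕ) (hk1 : 1 ≤ k) (hk2 : k ≤ n - 1) (hn : 2 ≤ n)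
    (hj1 : 1 ≤ j) (hj2 : j ≤ d) :
    iota n d (Y n d k j) =
      pathP n d k * eGen n d k 1 *
        (eGen n d k ((j : ZMod d)))⁻¹ * (pathP n d k)⁻¹ := by
  rw [Y, iota_prod k 1 (j-1) hk1 hk2 hn le_rfl (by omega)]
  have h1 : (1 + (j-1) : ℕ) = j := by omega
  rw [h1, Nat.cast_one]

lemma beta_pathP (i : ℕ) (hi1 : 1 ≤ i) (hi2 : i ≤ n - 1) (hn : 2 ≤ n)
    (k : ℕ) (hk : k ≤ n) :
    betaTilde n d i (pathP n d k) =
      if k < i then pathP n d k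
      else if k = i then pathP n d i * eGen n d i 2
      else if k = i + 1 then pathP n d i
      else pathP n d k := by
  induction k with
  | zero =>
      rw [if_pos (by omega : 0 < i)]
      simp [pathP]
  | succ k ih =>
      rw [pathP_succ, map_mul, ih (by omega), beta_eGen i k (by omega)]
      by_cases h1 : k + 1 < i
      · rw [if_pos (show k < i by omega), if_neg (show ¬ k + 1 = i by omega),
          if_neg (show ¬ k = i by omega), if_neg (show ¬ k = i + 1 by omega),
          if_pos h1]
      by_cases h2 : k + 1 = i
      · rw [if_pos (show k < i by omega), if_pos h2,
          if_neg (show ¬ k + 1 < i by omega), if_pos h2, ← h2, pathP_succ]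
        rw [mul_assoc]
        norm_num
      by_cases h3 : k = i
      · rw [if_neg (show ¬ k < i by omega), if_pos h3,
          if_neg (show ¬ k + 1 = i by omega), if_pos h3,
          if_neg (show ¬ k + 1 < i by omega), if_neg (show ¬ k + 1 = i by omega),
          if_pos (show k + 1 = i + 1 by omega), h3]
        have h11 : (1 : ZMod d) + 1 = 2 := one_add_one_eq_two
        rw [h11]
        group
      by_cases h4 : k = i + 1
      · rw [if_neg (show ¬ k < i by omega), if_neg h3, if_pos h4,
          if_neg (show ¬ k + 1 = i by omega), if_neg h3, if_pos h4,
          if_neg (show ¬ k + 1 < i by omega), if_neg (show ¬ k + 1 = i by omega),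
          if_neg (show ¬ k + 1 = i + 1 by omega), h4]
        rw [pathP_succ, mul_assoc]
      · rw [if_neg (show ¬ k < i by omega), if_neg h3, if_neg h4,
          if_neg (show ¬ k + 1 = i by omega), if_neg h3, if_neg h4,
          if_neg (show ¬ k + 1 < i by omega), if_neg (show ¬ k + 1 = i by omega),
          if_neg (show ¬ k + 1 = i + 1 by omega)]

end Lemmas

/-- For each `i` with `1 ≤ i ≤ n−1`, the intertwining identity
`ι ∘ T_i = β̃_i ∘ ι` holds as homomorphisms `F → E`; that is, the action of
`β̃_i` on the elements `ι(x_{k,j})` of `E` is given exactly by the formulas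
defining `T_i`. -/
theorem iota_intertwines (n d : ℕ) (hn : 2 ≤ n) (hd : 2 ≤ d)
    (i : ℕ) (hi1 : 1 ≤ i) (hi2 : i ≤ n - 1) :
    (iota n d).comp (T n d i) = (betaTilde n d i).comp (iota n d) := by
  apply FreeGroup.ext_hom
  intro p
  have hk2 : (p.1 : ℕ) + 1 ≤ n - 1 := p.1.isLt
  have hj2 : (p.2 : ℕ) + 1 ≤ d - 1 := p.2.isLt
  have hkn : (p.1 : ℕ) + 1 ≤ n := by omega
  have hk1 : 1 ≤ (p.1 : ℕ) + 1 := by omega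
  simp only [MonoidHom.comp_apply]
  rw [iota_of p, map_mul, map_mul, map_mul, map_inv, map_inv,
    beta_pathP i hi1 hi2 hn ((p.1 : ℕ) + 1) hkn,
    beta_eGen i ((p.1 : ℕ) + 1) hkn, beta_eGen i ((p.1 : ℕ) + 1) hkn]
  simp only [T, FreeGroup.lift_apply_of]
  by_cases h1 : (p.1 : ℕ) + 1 + 1 = i
  · -- k = i - 1
    simp only [if_pos h1, if_pos (show (p.1 : ℕ) + 1 < i by omega)]
    rw [map_mul, map_mul, map_inv,
      iota_Y ((p.1 : ℕ) + 1) ((p.2 : ℕ) + 1) hk1 hk2 hn (by omega) (by omega),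
      iota_Y ((p.1 : ℕ) + 1) ((p.2 : ℕ) + 1 + 1) hk1 hk2 hn (by omega) (by omega),
      iota_X i ((p.2 : ℕ) + 1 + 1) hi1 hi2 hn hd (by omega) (by omega),
      show pathP n d i = pathP n d ((p.1 : ℕ) + 1) * eGen n d ((p.1 : ℕ) + 1) 1 by
        rw [← h1]; exact pathP_succ _]
    push_cast
    ring_nf
    group
  by_cases h2 : (p.1 : ℕ) + 1 = i
  · -- k = i
    simp only [if_neg h1, if_pos h2, if_neg (show ¬ (p.1 : ℕ) + 1 < i by omega)]
    rw [map_mul, map_mul, map_inv, map_inv,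
      iota_prod i 2 ((p.2 : ℕ) + 1 - 1) hi1 hi2 hn (by omega) (by omega),
      iota_X i ((p.2 : ℕ) + 1 + 1) hi1 hi2 hn hd (by omega) (by omega),
      ← h2]
    push_cast
    ring_nf
    group
  by_cases h3 : (p.1 : ℕ) + 1 = i + 1
  · -- k = i + 1
    simp only [if_neg h1, if_neg h2, if_pos h3,
      if_neg (show ¬ (p.1 : ℕ) + 1 < i by omega)]
    rw [map_mul, map_mul, map_inv,
      iota_Y i ((p.2 : ℕ) + 1) hi1 hi2 hn (by omega) (by omega),
      iota_Y i ((p.2 : ℕ) + 1 + 1) hi1 hi2 hn (by omega) (by omega),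
      iota_X_lt ((p.1 : ℕ) + 1) ((p.2 : ℕ) + 1) hk1 hk2 hn (by omega) (by omega),
      h3, pathP_succ]
    push_cast
    ring_nf
    group
  · -- other generators are fixed
    simp only [if_neg h1, if_neg h2, if_neg h3, ite_self]
    rw [iota_of p]
end

section
/- For each i with 1 ≤ i ≤ n−1 and each j ∈ ℤ/dℤ, the Dehn twist endomorphism D_{i,j} of E is bijective, i.e., D_{i,j} is an automorphism of E. -/
/-- The Dehn twist `D_{i,j}` along the loop `x_{i,j}`, as an endomorphism of
the free group `E`, defined on generators by
`e_{i−1,j} ↦ e_{i−1,j}·e_{i,j+1}`, `e_{i−1,k} ↦ e_{i−1,k}·e_{i,j}` for `k ≠ j`,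
`e_{i,j} ↦ e_{i,j+1}⁻¹`, `e_{i,j+1} ↦ e_{i,j}⁻¹`,
`e_{i,k} ↦ e_{i,j}⁻¹·e_{i,k}·e_{i,j}⁻¹` for `k ≠ j, j+1`,
`e_{i+1,j+1} ↦ e_{i,j+1}·e_{i+1,j+1}`, `e_{i+1,k} ↦ e_{i,j}·e_{i+1,k}` for
`k ≠ j+1`, and fixing all generators `e_{m,k}` with `m ∉ {i−1, i, i+1}`. -/
def dehn (n d : ℕ) (i : ℕ) (j : ZMod d) : Egrp n d →* Egrp n d :=
  FreeGroup.lift fun p =>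
    let k := p.2
    if (p.1 : ℕ) + 1 = i then
      FreeGroup.of p * (if k = j then eGen n d i (j + 1) else eGen n d i j)
    else if (p.1 : ℕ) = i then
      if k = j then (FreeGroup.of (p.1, j + 1))⁻¹
      else if k = j + 1 then (FreeGroup.of (p.1, j))⁻¹
      else (FreeGroup.of (p.1, j))⁻¹ * FreeGroup.of p * (FreeGroup.of (p.1, j))⁻¹
    else if (p.1 : ℕ) = i + 1 then
      (if k = j + 1 then eGen n d i (j + 1) else eGen n d i j) * FreeGroup.of p
    else
      FreeGroup.of p


/-- Explicit inverse of the Dehn twist `D_{i,j}`. -/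
def dehnInv (n d : ℕ) (i : ℕ) (j : ZMod d) : Egrp n d →* Egrp n d :=
  FreeGroup.lift fun p =>
    let k := p.2
    if (p.1 : ℕ) + 1 = i then
      FreeGroup.of p * (if k = j then eGen n d i j else eGen n d i (j + 1))
    else if (p.1 : ℕ) = i then
      if k = j then (FreeGroup.of (p.1, j + 1))⁻¹
      else if k = j + 1 then (FreeGroup.of (p.1, j))⁻¹
      else (FreeGroup.of (p.1, j + 1))⁻¹ * FreeGroup.of p * (FreeGroup.of (p.1, j + 1))⁻¹
    else if (p.1 : ℕ) = i + 1 then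
      (if k = j + 1 then eGen n d i j else eGen n d i (j + 1)) * FreeGroup.of p
    else
      FreeGroup.of p

/-- For each `i` with `1 ≤ i ≤ n−1` and each `j ∈ ℤ/dℤ`, the Dehn twist
endomorphism `D_{i,j}` of `E` is bijective, i.e. `D_{i,j}` is an automorphism
of `E`. -/
theorem dehn_bijective (n d : ℕ) (hn : 2 ≤ n) (hd : 2 ≤ d)
    (i : ℕ) (hi1 : 1 ≤ i) (hi2 : i ≤ n - 1) (j : ZMod d) :
    Function.Bijective (dehn n d i j) := by
  haveI : Fact (1 < d) := ⟨hd⟩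
  have hni : i < n + 1 := by omega
  open Fin.NatCast in
  have hI : (((i : ℕ) : Fin (n + 1)) : ℕ) = i := by
    simp [Fin.val_natCast, Nat.mod_eq_of_lt hni]
  have hj : (j + 1 : ZMod d) ≠ j := by simp [add_eq_left]
  have hj' : j ≠ j + 1 := hj.symm
  have hii : ¬ (i + 1 = i) := by omega
  have hii2 : ¬ (i + 1 + 1 = i) := by omega
  set D := dehn n d i j with hD
  set G := dehnInv n d i j with hG
  have hGD : ∀ p, G (D (FreeGroup.of p)) = FreeGroup.of p := by
    rintro ⟨a, k⟩
    by_cases h1 : (a : ℕ) + 1 = i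
    · by_cases h2 : k = j <;>
        simp [hD, hG, dehn, dehnInv, eGen, h1, h2, hI, hj, hj', hii, hii2, mul_assoc]
    · by_cases h2 : (a : ℕ) = i
      · have h2' : ¬ ((a : ℕ) + 1 = i) := by omega
        by_cases h3 : k = j
        · simp [hD, hG, dehn, dehnInv, eGen, h2, h2', h3, hI, hj, hj', hii, hii2]
        · by_cases h4 : k = j + 1 <;>
            simp [hD, hG, dehn, dehnInv, eGen, h2, h2', h3, h4, hI, hj, hj', hii, hii2, mul_assoc]
      · by_cases h3 : (a : ℕ) = i + 1
        · have h3' : ¬ ((a : ℕ) + 1 = i) := by omega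
          by_cases h4 : k = j + 1 <;>
            simp [hD, hG, dehn, dehnInv, eGen, h2, h3, h3', h4, hI, hj, hj', hii, hii2, mul_assoc]
        · simp [hD, hG, dehn, dehnInv, eGen, h1, h2, h3, hI]
  have hDG : ∀ p, D (G (FreeGroup.of p)) = FreeGroup.of p := by
    rintro ⟨a, k⟩
    by_cases h1 : (a : ℕ) + 1 = i
    · by_cases h2 : k = j <;>
        simp [hD, hG, dehn, dehnInv, eGen, h1, h2, hI, hj, hj', hii, hii2, mul_assoc]
    · by_cases h2 : (a : ℕ) = i
      · have h2' : ¬ ((a : ℕ) + 1 = i) := by omega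
        by_cases h3 : k = j
        · simp [hD, hG, dehn, dehnInv, eGen, h2, h2', h3, hI, hj, hj', hii, hii2]
        · by_cases h4 : k = j + 1 <;>
            simp [hD, hG, dehn, dehnInv, eGen, h2, h2', h3, h4, hI, hj, hj', hii, hii2, mul_assoc]
      · by_cases h3 : (a : ℕ) = i + 1
        · have h3' : ¬ ((a : ℕ) + 1 = i) := by omega
          by_cases h4 : k = j + 1 <;>
            simp [hD, hG, dehn, dehnInv, eGen, h2, h3, h3', h4, hI, hj, hj', hii, hii2, mul_assoc]
        · simp [hD, hG, dehn, dehnInv, eGen, h1, h2, h3, hI]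
  have h1 : G.comp D = MonoidHom.id _ := FreeGroup.ext_hom _ _ (by simpa using hGD)
  have h2 : D.comp G = MonoidHom.id _ := FreeGroup.ext_hom _ _ (by simpa using hDG)
  have hL : ∀ x, G (D x) = x := fun x => DFunLike.congr_fun h1 x
  have hR : ∀ x, D (G x) = x := fun x => DFunLike.congr_fun h2 x
  exact Function.bijective_iff_has_inverse.mpr ⟨G, hL, hR⟩
end
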